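/- Let (Ω, μ) be a measure space, let u : Ω → ℝ be measurable with u ≥ 0 μ-almost everywhere, and let w : Ω → ℝ be square-integrable with respect to μ. For ε > 0 set Θ_ε² := ∫_Ω min(u/ε, w) · w dμ and set Θ₀² := ∫_Ω ( w·𝟙_{{u>0}} + min(0, w)·𝟙_{{u=0}} )² dμ. Then: (i) 0 ≤ Θ_{ε₁}² ≤ Θ_{ε₂}² ≤ Θ₀² for all ε₁ ≥ ε₂ > 0; (ii) Θ_ε² → Θ₀² as ε → 0 from the right. -/

import Mathlib

open Set Filter Topology MeasureTheory

/-- Properties of the stationarity measures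
`Θ_ε² = ∫ min(u/ε, w) w dμ` and `Θ₀² = ∫ (w 𝟙_{u>0} + min(0,w) 𝟙_{u=0})² dμ`:
monotonicity `0 ≤ Θ_{ε₁}² ≤ Θ_{ε₂}² ≤ Θ₀²` for `ε₁ ≥ ε₂ > 0` and convergence
`Θ_ε² → Θ₀²` as `ε → 0⁺`. -/
theorem stationarity_measure_properties {Ω : Type*} [MeasurableSpace Ω]
    (μ : Measure Ω) (u w : Ω → ℝ) (hu : Measurable u)
    (hnn : ∀ᵐ x ∂μ, 0 ≤ u x) (hw : MemLp w 2 μ) :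
    (∀ ε₁ ε₂ : ℝ, 0 < ε₂ → ε₂ ≤ ε₁ →
      0 ≤ (∫ x, min (u x / ε₁) (w x) * w x ∂μ) ∧
      (∫ x, min (u x / ε₁) (w x) * w x ∂μ) ≤ ∫ x, min (u x / ε₂) (w x) * w x ∂μ ∧
      (∫ x, min (u x / ε₂) (w x) * w x ∂μ) ≤
        ∫ x, (w x * ({x | 0 < u x}.indicator (fun _ => (1:ℝ)) x) +
          min 0 (w x) * ({x | u x = 0}.indicator (fun _ => (1:ℝ)) x)) ^ 2 ∂μ) ∧
    Tendsto (fun ε : ℝ => ∫ x, min (u x / ε) (w x) * w x ∂μ) (𝓝[>] 0)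
      (𝓝 (∫ x, (w x * ({x | 0 < u x}.indicator (fun _ => (1:ℝ)) x) +
        min 0 (w x) * ({x | u x = 0}.indicator (fun _ => (1:ℝ)) x)) ^ 2 ∂μ)) := by
  have hwm : AEMeasurable w μ := hw.aestronglyMeasurable.aemeasurable
  have hW : Integrable (fun x => w x ^ 2) μ := hw.integrable_sq
  set g : Ω → ℝ := fun x => (w x * ({x | 0 < u x}.indicator (fun _ => (1:ℝ)) x) +
      min 0 (w x) * ({x | u x = 0}.indicator (fun _ => (1:ℝ)) x)) with hg
  have hgpos : ∀ x, 0 < u x → g x = w x := by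
    intro x hx
    simp [hg, Set.indicator_apply, hx, hx.ne']
  have hgzero : ∀ x, u x = 0 → g x = min 0 (w x) := by
    intro x hx
    simp [hg, Set.indicator_apply, hx]
  -- pointwise nonnegativity
  have key0 : ∀ ε : ℝ, 0 < ε → ∀ x, 0 ≤ u x → 0 ≤ min (u x / ε) (w x) * w x := by
    intro ε hε x hx
    have hq : 0 ≤ u x / ε := div_nonneg hx hε.le
    rcases le_total (w x) 0 with h | h
    · rw [min_eq_right (h.trans hq)]
      exact mul_self_nonneg _
    · exact mul_nonneg (le_min hq h) h
  -- pointwise monotonicity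
  have key1 : ∀ ε₁ ε₂ : ℝ, 0 < ε₂ → ε₂ ≤ ε₁ → ∀ x, 0 ≤ u x →
      min (u x / ε₁) (w x) * w x ≤ min (u x / ε₂) (w x) * w x := by
    intro ε₁ ε₂ hε₂ hle x hx
    have hε₁ : 0 < ε₁ := hε₂.trans_le hle
    have hε₁ : 0 < ε₁ := hε₂.trans_le hle
    have hdiv : u x / ε₁ ≤ u x / ε₂ := by
      rw [div_le_div_iff₀ hε₁ hε₂]; nlinarith
    rcases le_total (w x) 0 with h | h
    · rw [min_eq_right (h.trans (div_nonneg hx hε₁.le)),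
        min_eq_right (h.trans (div_nonneg hx hε₂.le))]
    · exact mul_le_mul_of_nonneg_right (min_le_min_right _ hdiv) h
  -- pointwise bound by w²
  have keysq : ∀ ε : ℝ, 0 < ε → ∀ x, 0 ≤ u x →
      min (u x / ε) (w x) * w x ≤ w x ^ 2 := by
    intro ε hε x hx
    rcases le_total (w x) 0 with h | h
    · rw [min_eq_right (h.trans (div_nonneg hx hε.le))]; nlinarith
    · nlinarith [min_le_right (u x / ε) (w x)]
  -- pointwise bound by g²
  have key2 : ∀ ε : ℝ, 0 < ε → ∀ x, 0 ≤ u x →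
      min (u x / ε) (w x) * w x ≤ g x ^ 2 := by
    intro ε hε x hx
    rcases hx.lt_or_eq with hx' | hx'
    · rw [hgpos x hx']; exact keysq ε hε x hx
    · rw [hgzero x hx'.symm, ← hx', zero_div]
      rcases le_total (w x) 0 with h | h
      · rw [min_eq_right h]; nlinarith
      · rw [min_eq_left h]; nlinarith
  -- measurability facts
  have hfm : ∀ ε : ℝ, AEStronglyMeasurable (fun x => min (u x / ε) (w x) * w x) μ :=
    fun ε => (((hu.aemeasurable.div_const ε).min hwm).mul hwm).aestronglyMeasurable
  have hs1 : MeasurableSet {x | 0 < u x} := measurableSet_lt measurable_const hu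
  have hs2 : MeasurableSet {x | u x = 0} := hu (measurableSet_singleton 0)
  have hgm : AEMeasurable g μ :=
    (hwm.mul (measurable_const.indicator hs1).aemeasurable).add
      ((aemeasurable_const.min hwm).mul (measurable_const.indicator hs2).aemeasurable)
  have hGm : AEStronglyMeasurable (fun x => g x ^ 2) μ :=
    (hgm.pow_const 2).aestronglyMeasurable
  -- integrability of the ε-integrands
  have hfi : ∀ ε : ℝ, 0 < ε → Integrable (fun x => min (u x / ε) (w x) * w x) μ := by
    intro ε hε
    refine hW.mono' (hfm ε) (hnn.mono fun x hx => ?_)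
    rw [Real.norm_eq_abs, abs_of_nonneg (key0 ε hε x hx)]
    exact keysq ε hε x hx
  -- g² ≤ w² everywhere
  have hGle : ∀ x, g x ^ 2 ≤ w x ^ 2 := by
    intro x
    rcases lt_trichotomy (u x) 0 with h | h | h
    · have : g x = 0 := by
        simp [hg, Set.indicator_apply, not_lt.mpr h.le, h.ne]
      rw [this]; simpa using sq_nonneg (w x)
    · rw [hgzero x h]
      rcases le_total (w x) 0 with h' | h'
      · rw [min_eq_right h']
      · rw [min_eq_left h']; simpa using sq_nonneg (w x)
    · rw [hgpos x h]
  have hGi : Integrable (fun x => g x ^ 2) μ := by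
    refine hW.mono' hGm (ae_of_all μ fun x => ?_)
    rw [Real.norm_eq_abs, abs_of_nonneg (sq_nonneg _)]
    exact hGle x
  constructor
  · intro ε₁ ε₂ hε₂ hle
    have hε₁ : 0 < ε₁ := hε₂.trans_le hle
    refine ⟨?_, ?_, ?_⟩
    · exact integral_nonneg_of_ae (hnn.mono fun x hx => key0 ε₁ hε₁ x hx)
    · exact integral_mono_ae (hfi ε₁ hε₁) (hfi ε₂ hε₂)
        (hnn.mono fun x hx => key1 ε₁ ε₂ hε₂ hle x hx)
    · exact integral_mono_ae (hfi ε₂ hε₂) hGi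
        (hnn.mono fun x hx => key2 ε₂ hε₂ x hx)
  · refine tendsto_integral_filter_of_dominated_convergence (fun x => w x ^ 2)
      (Eventually.of_forall fun ε => hfm ε) ?_ hW ?_
    · filter_upwards [self_mem_nhdsWithin] with ε (hε : (0:ℝ) < ε)
      filter_upwards [hnn] with x hx
      rw [Real.norm_eq_abs, abs_of_nonneg (key0 ε hε x hx)]
      exact keysq ε hε x hx
    · filter_upwards [hnn] with x hx
      rcases hx.lt_or_eq with hx' | hx'
      · -- u x > 0: eventually equal to w x ^ 2
        have hδ : (0:ℝ) < u x / (|w x| + 1) := by positivity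
        have hmem : Ioo (0:ℝ) (u x / (|w x| + 1)) ∈ 𝓝[>] (0:ℝ) :=
          Ioo_mem_nhdsGT_of_mem ⟨le_refl 0, hδ⟩
        refine Tendsto.congr' ?_ (tendsto_const_nhds (x := g x ^ 2))
        filter_upwards [hmem] with ε hε
        have hε0 : 0 < ε := hε.1
        have hlt : ε * (|w x| + 1) < u x := by
          have := hε.2
          rwa [lt_div_iff₀ (by positivity)] at this
        have hwle : w x ≤ u x / ε := by
          rw [le_div_iff₀ hε0]
          nlinarith [le_abs_self (w x), abs_nonneg (w x)]
        rw [min_eq_right hwle, hgpos x hx', sq]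
      · -- u x = 0: constant
        have hconst : (fun ε : ℝ => min (u x / ε) (w x) * w x) =
            fun _ : ℝ => min 0 (w x) * w x := by
          funext ε; rw [← hx', zero_div]
        rw [hconst]
        have : g x ^ 2 = min 0 (w x) * w x := by
          rw [hgzero x hx'.symm]
          rcases le_total (w x) 0 with h | h
          · rw [min_eq_right h]; ring
          · rw [min_eq_left h]; ring
        rw [this]
        exact tendsto_const_nhds
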